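/- On E = C([−1,1]), define u(x) = 1 − |x|, v(x) = |x|·1_{[−1,0]}(x), w(x) = |x|·1_{[0,1]}(x), and the operator T f = (1/2)(∫_{−1}^{1} f(x) dx)·u + f(1)·v + f(−1)·w. Then T is a positive bounded linear operator with T𝟙 = 𝟙 (where 𝟙 is the constant function 1), and T(v − w) = −(v − w) with v − w ≠ 0; hence −1 is an eigenvalue of T even though T maps every nonzero nonnegative function to a function whose closed support is all of [−1,1]. -/

import Mathlib

open MeasureTheory

attribute [local instance] MeasureTheory.Measure.Subtype.measureSpace

noncomputable section CexAux

namespace CexAux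

abbrev I : Set ℝ := Set.Icc (-1 : ℝ) 1

instance : IsFiniteMeasure (volume : Measure I) := by
  constructor
  rw [Measure.Subtype.volume_univ measurableSet_Icc.nullMeasurableSet, Real.volume_Icc]
  norm_num

lemma integrable_cm (f : C(I, ℝ)) : Integrable (fun y : I => f y) volume :=
  (BoundedContinuousFunction.mkOfCompact f).integrable volume

def U : C(I, ℝ) := ⟨fun x => 1 - |x.1|, by fun_prop⟩
def V : C(I, ℝ) := ⟨fun x => max (-x.1) 0, by fun_prop⟩
def W : C(I, ℝ) := ⟨fun x => max x.1 0, by fun_prop⟩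

def Tlin : C(I, ℝ) →ₗ[ℝ] C(I, ℝ) where
  toFun f := ((1 / 2) * ∫ y : I, f y) • U + f ⟨1, by norm_num⟩ • V + f ⟨-1, by norm_num⟩ • W
  map_add' f g := by
    simp only [ContinuousMap.add_apply, integral_add (integrable_cm f) (integrable_cm g)]
    ext x
    simp only [ContinuousMap.add_apply, ContinuousMap.smul_apply, smul_eq_mul]
    ring
  map_smul' c f := by
    simp only [ContinuousMap.smul_apply, smul_eq_mul, RingHom.id_apply]
    rw [integral_const_mul]
    ext x
    simp only [ContinuousMap.add_apply, ContinuousMap.smul_apply, smul_eq_mul]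
    ring

lemma abs_integral_le (f : C(I, ℝ)) : |∫ y : I, f y| ≤ 2 * ‖f‖ := by
  calc |∫ y : I, f y| ≤ ∫ y : I, ‖f y‖ := by
        rw [← Real.norm_eq_abs]; exact norm_integral_le_integral_norm _
    _ ≤ ∫ _y : I, ‖f‖ := by
        apply integral_mono (integrable_cm f).norm (integrable_const _)
        intro y; exact f.norm_coe_le_norm y
    _ = (volume (Set.univ : Set I)).toReal * ‖f‖ := by
        rw [integral_const]; simp [smul_eq_mul, measureReal_def]
    _ = 2 * ‖f‖ := by
        rw [Measure.Subtype.volume_univ measurableSet_Icc.nullMeasurableSet, Real.volume_Icc]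
        norm_num

lemma norm_UVW_apply (x : I) : |U x| ≤ 1 ∧ |V x| ≤ 1 ∧ |W x| ≤ 1 := by
  obtain ⟨x, hx1, hx2⟩ := x
  simp only [U, V, W, ContinuousMap.coe_mk]
  constructor
  · rw [abs_le]; constructor <;> [skip; skip] <;> cases abs_cases x <;> nlinarith
  constructor
  · rw [abs_le]; constructor
    · nlinarith [le_max_right (-x) 0]
    · rw [max_le_iff]; constructor <;> linarith
  · rw [abs_le]; constructor
    · nlinarith [le_max_right x 0]
    · rw [max_le_iff]; constructor <;> linarith

lemma tlin_bound (f : C(I, ℝ)) : ‖Tlin f‖ ≤ 3 * ‖f‖ := by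
  apply ContinuousMap.norm_le _ (by positivity) |>.mpr
  intro x
  obtain ⟨hU, hV, hW⟩ := norm_UVW_apply x
  have h1 : |f ⟨1, by norm_num⟩| ≤ ‖f‖ := f.norm_coe_le_norm _
  have h2 : |f ⟨-1, by norm_num⟩| ≤ ‖f‖ := f.norm_coe_le_norm _
  have hint := abs_integral_le f
  simp only [Tlin, LinearMap.coe_mk, AddHom.coe_mk, ContinuousMap.add_apply,
    ContinuousMap.smul_apply, smul_eq_mul, Real.norm_eq_abs]
  calc |1 / 2 * (∫ y : I, f y) * U x + f ⟨1, by norm_num⟩ * V x + f ⟨-1, by norm_num⟩ * W x|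
      ≤ |1 / 2 * (∫ y : I, f y) * U x| + |f ⟨1, by norm_num⟩ * V x|
        + |f ⟨-1, by norm_num⟩ * W x| := by
        exact (abs_add_le _ _).trans (by gcongr; exact abs_add_le _ _)
    _ ≤ 1 / 2 * (2 * ‖f‖) * 1 + ‖f‖ * 1 + ‖f‖ * 1 := by
        rw [abs_mul, abs_mul, abs_mul, abs_mul, show |(1:ℝ)/2| = 1/2 by norm_num]
        gcongr  <;> first | positivity | norm_num | simpa using hint
    _ = 3 * ‖f‖ := by ring

def T : C(I, ℝ) →L[ℝ] C(I, ℝ) := Tlin.mkContinuous 3 tlin_bound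

end CexAux

end CexAux

/-- On `C([-1,1])` there is a positive bounded operator
`T f = (1/2)(∫ f)·u + f(1)·v + f(-1)·w` (with `u(x) = 1 - |x|`, `v(x) = max(-x,0)`,
`w(x) = max(x,0)`) which satisfies `T 1 = 1` and `T(v - w) = -(v - w)` with `v - w ≠ 0`;
hence `-1` is an eigenvalue of `T`. -/
theorem exists_counterexample_operator_on_C_Icc :
    ∃ (T : C(Set.Icc (-1 : ℝ) 1, ℝ) →L[ℝ] C(Set.Icc (-1 : ℝ) 1, ℝ))
      (u v w : C(Set.Icc (-1 : ℝ) 1, ℝ)),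
      (∀ x : Set.Icc (-1 : ℝ) 1, u x = 1 - |x.1|) ∧
      (∀ x : Set.Icc (-1 : ℝ) 1, v x = max (-x.1) 0) ∧
      (∀ x : Set.Icc (-1 : ℝ) 1, w x = max x.1 0) ∧
      (∀ (f : C(Set.Icc (-1 : ℝ) 1, ℝ)) (x : Set.Icc (-1 : ℝ) 1),
        T f x = (1 / 2) * (∫ y : Set.Icc (-1 : ℝ) 1, f y) * u x
          + f ⟨1, by norm_num⟩ * v x + f ⟨-1, by norm_num⟩ * w x) ∧
      (∀ f : C(Set.Icc (-1 : ℝ) 1, ℝ), 0 ≤ f → 0 ≤ T f) ∧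
      T 1 = 1 ∧ T (v - w) = -(v - w) ∧ v - w ≠ 0 := by
  refine ⟨CexAux.T, CexAux.U, CexAux.V, CexAux.W, fun x => rfl, fun x => rfl, fun x => rfl,
    ?_, ?_, ?_, ?_, ?_⟩
  · intro f x
    show (CexAux.Tlin f) x = _
    simp only [CexAux.Tlin, LinearMap.coe_mk, AddHom.coe_mk, ContinuousMap.add_apply,
      ContinuousMap.smul_apply, smul_eq_mul]
    try ring
  · intro f hf
    have hf' : ∀ y : CexAux.I, 0 ≤ f y := fun y => hf y
    rw [ContinuousMap.le_def]
    intro x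
    show (0 : ℝ) ≤ (CexAux.Tlin f) x
    simp only [CexAux.Tlin, LinearMap.coe_mk, AddHom.coe_mk, ContinuousMap.add_apply,
      ContinuousMap.smul_apply, smul_eq_mul]
    have hint : 0 ≤ ∫ y : CexAux.I, f y := integral_nonneg hf'
    have hU : 0 ≤ CexAux.U x := by
      obtain ⟨x, hx1, hx2⟩ := x
      simp only [CexAux.U, ContinuousMap.coe_mk]
      cases abs_cases x <;> nlinarith
    have hV : 0 ≤ CexAux.V x := le_max_right _ _
    have hW : 0 ≤ CexAux.W x := le_max_right _ _
    have t1 := mul_nonneg (mul_nonneg (by norm_num : (0:ℝ) ≤ 1/2) hint) hU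
    have t2 := mul_nonneg (hf' ⟨1, by norm_num⟩) hV
    have t3 := mul_nonneg (hf' ⟨-1, by norm_num⟩) hW
    linarith
  · -- T 1 = 1
    ext x
    show (CexAux.Tlin 1) x = _
    have hone : ∫ _y : CexAux.I, (1 : ℝ) = 2 := by
      rw [integral_const, measureReal_def,
        Measure.Subtype.volume_univ measurableSet_Icc.nullMeasurableSet, Real.volume_Icc]
      norm_num
    simp only [CexAux.Tlin, LinearMap.coe_mk, AddHom.coe_mk, ContinuousMap.add_apply,
      ContinuousMap.smul_apply, smul_eq_mul, ContinuousMap.one_apply]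
    rw [hone]
    obtain ⟨x, hx1, hx2⟩ := x
    simp only [CexAux.U, CexAux.V, CexAux.W, ContinuousMap.coe_mk]
    rcases le_or_gt x 0 with h | h
    · rw [abs_of_nonpos h, max_eq_left (by linarith), max_eq_right h]; ring
    · rw [abs_of_pos h, max_eq_right (by linarith), max_eq_left h.le]; ring
  · -- T (V - W) = -(V - W)
    have hint : ∫ y : CexAux.I, (CexAux.V - CexAux.W) y = 0 := by
      have : (fun y : CexAux.I => (CexAux.V - CexAux.W) y)
          = fun y : CexAux.I => -(y : ℝ) := by
        funext y
        simp only [ContinuousMap.sub_apply, CexAux.V, CexAux.W, ContinuousMap.coe_mk]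
        rcases le_or_gt (y : ℝ) 0 with h | h
        · rw [max_eq_left (by linarith), max_eq_right h]; ring
        · rw [max_eq_right (by linarith), max_eq_left h.le]; ring
      rw [this, integral_subtype measurableSet_Icc, MeasureTheory.integral_Icc_eq_integral_Ioc,
        ← intervalIntegral.integral_of_le (by norm_num : (-1 : ℝ) ≤ 1)]
      open intervalIntegral in rw [intervalIntegral.integral_neg, integral_id]
      norm_num
    ext x
    show (CexAux.Tlin (CexAux.V - CexAux.W)) x = _
    simp only [CexAux.Tlin, LinearMap.coe_mk, AddHom.coe_mk, ContinuousMap.add_apply,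
      ContinuousMap.smul_apply, smul_eq_mul, ContinuousMap.neg_apply, ContinuousMap.sub_apply]
    have hint' : ∫ y : CexAux.I, (CexAux.V y - CexAux.W y) = 0 := by
      rw [show (fun y : CexAux.I => CexAux.V y - CexAux.W y)
        = fun y : CexAux.I => (CexAux.V - CexAux.W) y from rfl]
      exact hint
    rw [hint']
    simp only [CexAux.V, CexAux.W, ContinuousMap.coe_mk]
    have hx := max_zero_sub_max_neg_zero_eq_self (x : ℝ)
    norm_num
    linarith
  · -- V - W ≠ 0
    intro h
    have := ContinuousMap.congr_fun h ⟨1, by norm_num⟩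
    simp only [ContinuousMap.sub_apply, ContinuousMap.zero_apply, CexAux.V, CexAux.W,
      ContinuousMap.coe_mk] at this
    norm_num at this
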